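/- Let E_X ≥ E_Z > 0, let 0 < ε < 1, and let L₁, L₂ be integers with L₁ ≥ -log₂(ε) - log₂(E_Z) and L₂ ≥ -log₂(ε) + log₂(E_X). With p_l = 1/(1 + e^{2^l/E_X}) and p̃_l = 1/(1 + e^{2^l/E_Z}), the following inequality holds: Σ_{l=-L₁}^{L₂} [H(p_l) - H(p̃_l)] ≥ log₂(E_X/E_Z) - 4·log₂(e)·ε. -/

import Mathlib

/-- The binary entropy function (base 2): `H(p) = -p log₂ p - (1-p) log₂ (1-p)`. -/
noncomputable def binEnt (p : ℝ) : ℝ :=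
  -(p * Real.logb 2 p) - (1 - p) * Real.logb 2 (1 - p)

/-- Auxiliary function: natural-log entropy of the tail geometric variable,
`Gn c = c/(e^c - 1) - ln (1 - e^{-c})`. -/
noncomputable def Gn (c : ℝ) : ℝ :=
  c / (Real.exp c - 1) - Real.log (1 - Real.exp (-c))

lemma exp_sub_one_pos {c : ℝ} (hc : 0 < c) : 0 < Real.exp c - 1 := by
  have := Real.add_one_le_exp c
  nlinarith [Real.add_one_le_exp c, Real.exp_pos c]

lemma one_sub_exp_neg_pos {c : ℝ} (hc : 0 < c) : 0 < 1 - Real.exp (-c) := by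
  have : Real.exp (-c) < Real.exp 0 := Real.exp_lt_exp.mpr (by linarith)
  simpa [Real.exp_zero] using this

/-- The key telescoping identity. -/
lemma binEnt_eq_Gn_sub {c : ℝ} (hc : 0 < c) :
    binEnt (1 / (1 + Real.exp c)) = (Gn c - Gn (2 * c)) / Real.log 2 := by
  set E := Real.exp c with hEdef
  have hE1 : 1 < E := by
    have h := Real.exp_lt_exp.mpr hc
    rwa [Real.exp_zero, ← hEdef] at h
  have hE0 : 0 < E := lt_trans one_pos hE1
  have h1E : (0:ℝ) < 1 + E := by linarith
  have hEm1 : (0:ℝ) < E - 1 := by linarith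
  have hexp2 : Real.exp (2 * c) = E * E := by
    rw [two_mul, Real.exp_add]
  have hexpneg : Real.exp (-c) = E⁻¹ := by rw [Real.exp_neg]
  have hexpneg2 : Real.exp (-(2 * c)) = (E * E)⁻¹ := by rw [Real.exp_neg, hexp2]
  -- logs of p and 1 - p
  have hp1 : (1:ℝ) - 1 / (1 + E) = E / (1 + E) := by field_simp; ring
  have hlogp : Real.log (1 / (1 + E)) = -Real.log (1 + E) := by
    rw [one_div, Real.log_inv]
  have hlog1p : Real.log (E / (1 + E)) = c - Real.log (1 + E) := by
    rw [Real.log_div (ne_of_gt hE0) (ne_of_gt h1E), hEdef, Real.log_exp]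
  -- logs in Gn
  have ha : (1:ℝ) - Real.exp (-c) = (E - 1) / E := by
    rw [hexpneg]; field_simp
  have hb : (1:ℝ) - Real.exp (-(2 * c)) = ((E - 1) * (1 + E)) / (E * E) := by
    rw [hexpneg2]; field_simp; ring
  have hloga : Real.log (1 - Real.exp (-c)) = Real.log (E - 1) - c := by
    rw [ha, Real.log_div (ne_of_gt hEm1) (ne_of_gt hE0), hEdef, Real.log_exp]
  have hlogb : Real.log (1 - Real.exp (-(2 * c)))
      = Real.log (E - 1) + Real.log (1 + E) - 2 * c := by
    rw [hb, Real.log_div (by positivity) (by positivity),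
      Real.log_mul (ne_of_gt hEm1) (ne_of_gt h1E),
      Real.log_mul (ne_of_gt hE0) (ne_of_gt hE0), hEdef, Real.log_exp]
    ring
  have hE21 : Real.exp (2 * c) - 1 = (E - 1) * (1 + E) := by
    rw [hexp2]; ring
  unfold binEnt Gn
  rw [Real.logb, Real.logb, hp1, hlogp, hlog1p, hloga, hlogb, hE21, ← hEdef]
  have h2 : Real.log 2 ≠ 0 := by
    have := Real.log_pos (by norm_num : (1:ℝ) < 2); linarith
  field_simp
  ring

lemma Gn_nonneg {c : ℝ} (hc : 0 < c) : 0 ≤ Gn c := by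
  have h1 := exp_sub_one_pos hc
  have h2 := one_sub_exp_neg_pos hc
  have h3 : Real.log (1 - Real.exp (-c)) ≤ 0 :=
    Real.log_nonpos (le_of_lt h2) (by nlinarith [Real.exp_pos (-c)])
  have h4 : 0 ≤ c / (Real.exp c - 1) := by positivity
  unfold Gn
  linarith

lemma sq_le_exp {b : ℝ} (hb : 0 ≤ b) : b ^ 2 ≤ Real.exp b := by
  have h2 : b / 2 ≤ Real.exp (b / 2) / Real.exp 1 := by
    have h := Real.add_one_le_exp (b / 2 - 1)
    rw [← Real.exp_sub]
    linarith
  have he1 : (2 : ℝ) ≤ Real.exp 1 := by nlinarith [Real.add_one_le_exp 1]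
  have hb2 : 0 ≤ b / 2 := by linarith
  have h3 : (b / 2) ^ 2 ≤ (Real.exp (b / 2) / Real.exp 1) ^ 2 :=
    pow_le_pow_left₀ hb2 h2 2
  have h4 : (Real.exp (b / 2)) ^ 2 = Real.exp b := by
    rw [sq, ← Real.exp_add]
    ring_nf
  have h5 : (Real.exp (b / 2) / Real.exp 1) ^ 2 = Real.exp b / (Real.exp 1) ^ 2 := by
    rw [div_pow, h4]
  have h6 : Real.exp b / (Real.exp 1) ^ 2 ≤ Real.exp b / 4 := by
    apply div_le_div_of_nonneg_left (le_of_lt (Real.exp_pos b)) (by norm_num)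
    nlinarith
  nlinarith

lemma Gn_tail {b ε : ℝ} (hε : 0 < ε) (hε1 : ε < 1) (hb : 2 / ε ≤ b) : Gn b ≤ 2 * ε := by
  have hb2 : 2 < b := by
    have : (2 : ℝ) < 2 / ε := by
      rw [lt_div_iff₀ hε]; nlinarith
    linarith
  have hbpos : (0 : ℝ) < b := by linarith
  have hEb : (2 : ℝ) ≤ Real.exp b := by nlinarith [Real.add_one_le_exp b]
  have hepos := Real.exp_pos b
  have h1 : b / (Real.exp b - 1) ≤ 2 * b / Real.exp b := by
    rw [div_le_div_iff₀ (by linarith) hepos]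
    nlinarith
  have hx : Real.exp (-b) ≤ 1 / 2 := by
    rw [Real.exp_neg]
    rw [inv_le_comm₀ (by linarith) (by norm_num)]
    linarith
  have hpos : 0 < 1 - Real.exp (-b) := one_sub_exp_neg_pos hbpos
  have hlog : -(2 * Real.exp (-b)) ≤ Real.log (1 - Real.exp (-b)) := by
    have h := Real.log_le_sub_one_of_pos (show (0:ℝ) < (1 - Real.exp (-b))⁻¹ by positivity)
    rw [Real.log_inv] at h
    have h2 : (1 - Real.exp (-b))⁻¹ - 1 = Real.exp (-b) / (1 - Real.exp (-b)) := by
      field_simp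
      ring
    have h3 : Real.exp (-b) / (1 - Real.exp (-b)) ≤ 2 * Real.exp (-b) := by
      rw [div_le_iff₀ hpos]
      nlinarith [Real.exp_pos (-b)]
    linarith
  have h4 : 2 * Real.exp (-b) ≤ 2 * b / Real.exp b := by
    rw [Real.exp_neg, mul_comm 2 (Real.exp b)⁻¹, ← div_eq_inv_mul,
      div_le_div_iff₀ hepos hepos]
    nlinarith
  have h5 : 4 * b / Real.exp b ≤ 4 / b := by
    rw [div_le_div_iff₀ hepos hbpos]
    nlinarith [sq_le_exp (le_of_lt hbpos)]
  have h6 : 4 / b ≤ 2 * ε := by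
    rw [div_le_iff₀ hbpos]
    have h7 : ε * (2 / ε) ≤ ε * b := by
      apply mul_le_mul_of_nonneg_left hb (le_of_lt hε)
    have h8 : ε * (2 / ε) = 2 := by field_simp
    nlinarith
  unfold Gn
  have : 2 * b / Real.exp b + 2 * b / Real.exp b = 4 * b / Real.exp b := by ring
  linarith

lemma psi_eq {c : ℝ} (hc : 0 < c) :
    Gn c + Real.log c
      = c / (Real.exp c - 1) + Real.log (c / (Real.exp c - 1)) + c := by
  have hEm1 := exp_sub_one_pos hc
  have hloga : Real.log (1 - Real.exp (-c)) = Real.log (Real.exp c - 1) - c := by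
    have h : 1 - Real.exp (-c) = (Real.exp c - 1) / Real.exp c := by
      rw [Real.exp_neg]; field_simp
    rw [h, Real.log_div (ne_of_gt hEm1) (Real.exp_ne_zero c), Real.log_exp]
  have hlogu : Real.log (c / (Real.exp c - 1)) = Real.log c - Real.log (Real.exp c - 1) :=
    Real.log_div (ne_of_gt hc) (ne_of_gt hEm1)
  unfold Gn
  rw [hloga, hlogu]
  ring

lemma psi_lower {c : ℝ} (hc : 0 < c) : 1 - c ≤ Gn c + Real.log c := by
  have hEm1 := exp_sub_one_pos hc
  have hupos : 0 < c / (Real.exp c - 1) := by positivity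
  have hmul : Real.exp (-c) * Real.exp c = 1 := by rw [← Real.exp_add]; simp
  have hul : Real.exp (-c) ≤ c / (Real.exp c - 1) := by
    rw [le_div_iff₀ hEm1]
    nlinarith [Real.add_one_le_exp (-c)]
  have hlogul : -c ≤ Real.log (c / (Real.exp c - 1)) := by
    calc -c = Real.log (Real.exp (-c)) := (Real.log_exp _).symm
    _ ≤ _ := (Real.log_le_log_iff (Real.exp_pos _) hupos).mpr hul
  rw [psi_eq hc]
  nlinarith [Real.add_one_le_exp (-c)]

lemma psi_upper {c : ℝ} (hc : 0 < c) : Gn c + Real.log c ≤ 1 + c := by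
  have hEm1 := exp_sub_one_pos hc
  have hupos : 0 < c / (Real.exp c - 1) := by positivity
  have hu1 : c / (Real.exp c - 1) ≤ 1 := by
    rw [div_le_one hEm1]
    nlinarith [Real.add_one_le_exp c]
  have hlog := Real.log_le_sub_one_of_pos hupos
  rw [psi_eq hc]
  linarith

lemma sum_telescope_Icc (g : ℤ → ℝ) (a : ℤ) :
    ∀ b, a ≤ b → ∑ l ∈ Finset.Icc a b, (g l - g (l + 1)) = g a - g (b + 1) := by
  refine Int.le_induction ?_ ?_
  · simp
  · intro b hb ih
    have hins : Finset.Icc a (b + 1) = insert (b + 1) (Finset.Icc a b) := by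
      ext x
      simp only [Finset.mem_Icc, Finset.mem_insert]
      omega
    have hnot : (b + 1) ∉ Finset.Icc a b := by
      intro hmem
      rw [Finset.mem_Icc] at hmem
      omega
    rw [hins, Finset.sum_insert hnot, ih]
    ring

/-- Intermediate bound (steps (b)-(e)) in the proof of the paper's Theorem 3: with
`p_l = 1/(1 + exp (2^l / E_X))` and `p̃_l = 1/(1 + exp (2^l / E_Z))`,
if `E_X ≥ E_Z > 0`, `0 < ε < 1`, `L₁ ≥ -log₂ ε - log₂ E_Z` and `L₂ ≥ -log₂ ε + log₂ E_X`, then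
`∑_{l = -L₁}^{L₂} [H(p_l) - H(p̃_l)] ≥ log₂ (E_X / E_Z) - 4 log₂(e) ε`. -/
theorem expansion_entropy_difference_bound (EX EZ ε : ℝ) (hEZ : 0 < EZ) (hE : EZ ≤ EX)
    (hε : 0 < ε) (hε1 : ε < 1) (L1 L2 : ℤ)
    (hL1 : -Real.logb 2 ε - Real.logb 2 EZ ≤ (L1 : ℝ))
    (hL2 : -Real.logb 2 ε + Real.logb 2 EX ≤ (L2 : ℝ)) :
    Real.logb 2 (EX / EZ) - 4 * Real.logb 2 (Real.exp 1) * ε ≤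
      ∑ l ∈ Finset.Icc (-L1) L2,
        (binEnt (1 / (1 + Real.exp (2 ^ l / EX))) -
          binEnt (1 / (1 + Real.exp (2 ^ l / EZ)))) := by
  have hEX : 0 < EX := lt_of_lt_of_le hEZ hE
  have hlog2 : 0 < Real.log 2 := Real.log_pos (by norm_num)
  -- translate the hypotheses on L1, L2
  have hzL1 : (2 : ℝ) ^ (-L1) ≤ ε * EZ := by
    have h1 : ((-L1 : ℤ) : ℝ) ≤ Real.logb 2 (ε * EZ) := by
      rw [Real.logb_mul (ne_of_gt hε) (ne_of_gt hEZ)]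
      push_cast
      linarith
    have h2 : (2 : ℝ) ^ ((-L1 : ℤ) : ℝ) ≤ (2 : ℝ) ^ Real.logb 2 (ε * EZ) :=
      (Real.rpow_le_rpow_left_iff (by norm_num)).mpr h1
    rwa [Real.rpow_logb (by norm_num) (by norm_num) (by positivity),
      Real.rpow_intCast] at h2
  have hzL2 : EX / ε ≤ (2 : ℝ) ^ L2 := by
    have h1 : Real.logb 2 (EX / ε) ≤ ((L2 : ℤ) : ℝ) := by
      rw [Real.logb_div (ne_of_gt hEX) (ne_of_gt hε)]
      linarith
    have h2 : (2 : ℝ) ^ Real.logb 2 (EX / ε) ≤ (2 : ℝ) ^ ((L2 : ℤ) : ℝ) :=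
      (Real.rpow_le_rpow_left_iff (by norm_num)).mpr h1
    rwa [Real.rpow_logb (by norm_num) (by norm_num) (by positivity),
      Real.rpow_intCast] at h2
  have hL12 : -L1 ≤ L2 := by
    have hchain : (2 : ℝ) ^ (-L1) < (2 : ℝ) ^ L2 := by
      have h1 : ε * EZ ≤ ε * EX := by nlinarith
      have h2 : ε * EX < EX / ε := by
        rw [lt_div_iff₀ hε]
        have hsq : ε * ε < 1 := by nlinarith
        nlinarith [mul_lt_mul_of_pos_left hsq hEX]
      linarith
    exact le_of_lt ((zpow_lt_zpow_iff_right₀ (by norm_num : (1:ℝ) < 2)).mp hchain)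
  -- rewrite each summand via the telescoping identity
  have hterm : ∀ E : ℝ, 0 < E → ∀ l : ℤ,
      binEnt (1 / (1 + Real.exp (2 ^ l / E))) =
        (Gn ((2 : ℝ) ^ l / E) - Gn ((2 : ℝ) ^ (l + 1) / E)) / Real.log 2 := by
    intro E hEpos l
    have hc : 0 < (2 : ℝ) ^ l / E := by positivity
    have h2 : (2 : ℝ) ^ (l + 1) / E = 2 * ((2 : ℝ) ^ l / E) := by
      rw [zpow_add_one₀ (two_ne_zero)]
      ring
    rw [h2]
    exact binEnt_eq_Gn_sub hc
  have hsum : ∑ l ∈ Finset.Icc (-L1) L2,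
        (binEnt (1 / (1 + Real.exp (2 ^ l / EX))) -
          binEnt (1 / (1 + Real.exp (2 ^ l / EZ))))
      = ((Gn ((2 : ℝ) ^ (-L1) / EX) - Gn ((2 : ℝ) ^ (L2 + 1) / EX)) -
          (Gn ((2 : ℝ) ^ (-L1) / EZ) - Gn ((2 : ℝ) ^ (L2 + 1) / EZ))) / Real.log 2 := by
    have hcongr : ∀ l ∈ Finset.Icc (-L1) L2,
        binEnt (1 / (1 + Real.exp (2 ^ l / EX))) -
          binEnt (1 / (1 + Real.exp (2 ^ l / EZ)))
        = (fun l : ℤ => (Gn ((2 : ℝ) ^ l / EX) - Gn ((2 : ℝ) ^ l / EZ)) / Real.log 2) l -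
          (fun l : ℤ => (Gn ((2 : ℝ) ^ l / EX) - Gn ((2 : ℝ) ^ l / EZ)) / Real.log 2) (l + 1) := by
      intro l _
      simp only
      rw [hterm EX hEX l, hterm EZ hEZ l]
      ring
    rw [Finset.sum_congr rfl hcongr,
      sum_telescope_Icc (fun l : ℤ => (Gn ((2 : ℝ) ^ l / EX) - Gn ((2 : ℝ) ^ l / EZ)) / Real.log 2)
        (-L1) L2 hL12]
    ring
  rw [hsum]
  have hgoalL : Real.logb 2 (EX / EZ) - 4 * Real.logb 2 (Real.exp 1) * ε
      = (Real.log (EX / EZ) - 4 * ε) / Real.log 2 := by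
    rw [Real.logb, Real.logb, Real.log_exp]
    ring
  rw [hgoalL, div_le_div_iff_of_pos_right hlog2]
  -- now the numerator inequality
  have hp : (0 : ℝ) < (2 : ℝ) ^ (-L1) := by positivity
  have hq : (0 : ℝ) < (2 : ℝ) ^ (L2 + 1) := by positivity
  have haXpos : 0 < (2 : ℝ) ^ (-L1) / EX := by positivity
  have haZpos : 0 < (2 : ℝ) ^ (-L1) / EZ := by positivity
  have hbZpos : 0 < (2 : ℝ) ^ (L2 + 1) / EZ := by positivity
  have haZ : (2 : ℝ) ^ (-L1) / EZ ≤ ε := by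
    rw [div_le_iff₀ hEZ]
    linarith
  have haX : (2 : ℝ) ^ (-L1) / EX ≤ (2 : ℝ) ^ (-L1) / EZ :=
    div_le_div_of_nonneg_left (le_of_lt hp) hEZ hE
  have hbX : 2 / ε ≤ (2 : ℝ) ^ (L2 + 1) / EX := by
    rw [le_div_iff₀ hEX]
    have h2 : (2 : ℝ) ^ (L2 + 1) = 2 * (2 : ℝ) ^ L2 := by
      rw [zpow_add_one₀ (two_ne_zero)]
      ring
    rw [h2]
    calc 2 / ε * EX = 2 * (EX / ε) := by ring
    _ ≤ 2 * (2 : ℝ) ^ L2 := by linarith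
  have hlogdiff : Real.log ((2 : ℝ) ^ (-L1) / EZ) - Real.log ((2 : ℝ) ^ (-L1) / EX)
      = Real.log (EX / EZ) := by
    rw [← Real.log_div (ne_of_gt haZpos) (ne_of_gt haXpos)]
    congr 1
    field_simp
  have h1 := psi_lower haXpos
  have h2 := psi_upper haZpos
  have h3 := Gn_tail hε hε1 hbX
  have h4 := Gn_nonneg hbZpos
  linarith
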